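/- Let α > 0 and q₀ > 0, and let q : [0,∞) → ℝ be a differentiable function with q(0) = q₀ and q'(τ) = -(1 - e^{-q(τ)/α}) for all τ ≥ 0. Then q(τ) > 0 for every τ ≥ 0, and q(τ) → 0 as τ → ∞. In particular, q never reaches 0 in finite time. -/

import Mathlib

open Set Filter

/-- In the limiting case `η₁·η₂ = 0` of a pairwise MCH2 peakon collision with
Helmholtz kernel, the rescaled peak separation obeys `dq/dτ = -(1 - e^{-q/α})`;
starting from `q₀ > 0` it stays positive for all time and tends to `0` only
asymptotically: the collision time is infinite. -/
theorem limiting_case_infinite_collision_time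
    (α q₀ : ℝ) (hα : 0 < α) (hq₀ : 0 < q₀)
    (q : ℝ → ℝ) (hq0 : q 0 = q₀)
    (hode : ∀ τ ∈ Set.Ici (0 : ℝ),
      HasDerivWithinAt q (-(1 - Real.exp (-(q τ)/α))) (Set.Ici 0) τ) :
    (∀ τ ∈ Set.Ici (0 : ℝ), 0 < q τ) ∧
    Tendsto q atTop (nhds 0) := by
  set c : ℝ := Real.exp (q₀ / α) - 1 with hc
  have hcpos : 0 < c := by
    have h1 : Real.exp 0 < Real.exp (q₀ / α) := Real.exp_lt_exp.mpr (by positivity)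
    rw [Real.exp_zero] at h1
    rw [hc]; linarith
  set g : ℝ → ℝ := fun τ => (Real.exp (q τ / α) - 1) * Real.exp (τ / α) with hg
  -- g has derivative 0 within Ici 0
  have hgderiv : ∀ τ ∈ Set.Ici (0 : ℝ), HasDerivWithinAt g 0 (Set.Ici 0) τ := by
    intro τ hτ
    have hq' := hode τ hτ
    have h1 : HasDerivWithinAt (fun t => q t / α)
        ((-(1 - Real.exp (-(q τ)/α))) / α) (Set.Ici 0) τ := hq'.div_const α
    have h2 : HasDerivWithinAt (fun t => Real.exp (q t / α))
        (Real.exp (q τ / α) * ((-(1 - Real.exp (-(q τ)/α))) / α)) (Set.Ici 0) τ := by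
      simpa [mul_comm] using h1.exp
    have h3 : HasDerivWithinAt (fun t => Real.exp (q t / α) - 1)
        (Real.exp (q τ / α) * ((-(1 - Real.exp (-(q τ)/α))) / α)) (Set.Ici 0) τ :=
      h2.sub_const 1
    have h4 : HasDerivWithinAt (fun t : ℝ => Real.exp (t / α))
        (Real.exp (τ / α) * (1 / α)) (Set.Ici 0) τ := by
      have : HasDerivWithinAt (fun t : ℝ => t / α) (1 / α) (Set.Ici 0) τ :=
        (hasDerivWithinAt_id τ _).div_const α
      simpa [mul_comm] using this.exp
    have h5 := h3.mul h4
    have key : (Real.exp (q τ / α) * ((-(1 - Real.exp (-(q τ)/α))) / α)) * Real.exp (τ / α)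
        + (Real.exp (q τ / α) - 1) * (Real.exp (τ / α) * (1 / α)) = 0 := by
      have hne : Real.exp (q τ / α) ≠ 0 := Real.exp_ne_zero _
      have hneg : Real.exp (-(q τ) / α) = (Real.exp (q τ / α))⁻¹ := by
        rw [← Real.exp_neg, neg_div]
      rw [hneg]
      field_simp
      ring
    exact key ▸ h5
  -- hence g is constant on Ici 0
  have hgconst : ∀ τ ∈ Set.Ici (0 : ℝ), g τ = c := by
    intro τ hτ
    have hcont : ContinuousOn g (Set.Icc 0 τ) := by
      intro x hx
      exact ((hgderiv x hx.1).continuousWithinAt).mono (fun y hy => hy.1)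
    have hder : ∀ x ∈ Set.Ico (0:ℝ) τ, HasDerivWithinAt g 0 (Set.Ici x) x := by
      intro x hx
      exact (hgderiv x hx.1).mono (Set.Ici_subset_Ici.mpr hx.1)
    have := constant_of_has_deriv_right_zero hcont hder τ (Set.right_mem_Icc.mpr hτ)
    rw [this]
    simp [hg, hq0, hc]
  -- explicit formula for exp(q τ / α)
  have hexp : ∀ τ ∈ Set.Ici (0 : ℝ),
      Real.exp (q τ / α) = 1 + c * Real.exp (-(τ / α)) := by
    intro τ hτ
    have h : (Real.exp (q τ / α) - 1) * Real.exp (τ / α) = c := hgconst τ hτ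
    have hTne : Real.exp (τ / α) ≠ 0 := Real.exp_ne_zero _
    rw [Real.exp_neg]
    field_simp
    nlinarith [h]
  have hpos : ∀ τ ∈ Set.Ici (0 : ℝ), 0 < q τ := by
    intro τ hτ
    have h := hexp τ hτ
    have h1 : (1 : ℝ) < Real.exp (q τ / α) := by
      have : 0 < c * Real.exp (-(τ / α)) := by positivity
      linarith
    have h2 : Real.exp 0 < Real.exp (q τ / α) := by rw [Real.exp_zero]; exact h1
    have := (div_pos_iff).mp (Real.exp_lt_exp.mp h2)
    rcases this with ⟨h, _⟩ | ⟨_, h⟩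
    · exact h
    · linarith
  refine ⟨hpos, ?_⟩
  -- q τ = α * log (1 + c * exp(-(τ/α))) for τ ≥ 0
  have heq : ∀ τ ∈ Set.Ici (0 : ℝ),
      q τ = α * Real.log (1 + c * Real.exp (-(τ / α))) := by
    intro τ hτ
    have h := hexp τ hτ
    have : q τ / α = Real.log (1 + c * Real.exp (-(τ / α))) := by
      rw [← Real.log_exp (q τ / α), h]
    rw [div_eq_iff hα.ne'] at this
    rw [this, mul_comm]
  have hlim : Tendsto (fun τ : ℝ => α * Real.log (1 + c * Real.exp (-(τ / α))))
      atTop (nhds 0) := by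
    have h1 : Tendsto (fun τ : ℝ => -(τ / α)) atTop atBot := by
      apply tendsto_neg_atBot_iff.mpr
      exact tendsto_id.atTop_div_const hα
    have h2 : Tendsto (fun τ : ℝ => Real.exp (-(τ / α))) atTop (nhds 0) :=
      Real.tendsto_exp_atBot.comp h1
    have h3 : Tendsto (fun τ : ℝ => 1 + c * Real.exp (-(τ / α))) atTop (nhds 1) := by
      have := (tendsto_const_nhds (x := (1:ℝ))).add ((tendsto_const_nhds (x := c)).mul h2)
      simpa using this
    have h4 : Tendsto (fun τ : ℝ => Real.log (1 + c * Real.exp (-(τ / α))))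
        atTop (nhds 0) := by
      have := (Real.continuousAt_log (by norm_num : (1:ℝ) ≠ 0)).tendsto.comp h3
      simpa [Function.comp_def] using this
    simpa using (tendsto_const_nhds (x := α)).mul h4
  exact hlim.congr' ((eventually_ge_atTop (0:ℝ)).mono fun τ hτ => (heq τ hτ).symm)
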